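/- Let N and M be well-formed labeled portnets and let (M,φ) be a partial mirror of N. Let S = compose({N,M}) with initial marking i_S = i_N + i_M. For any markings m_0, …, m_{n+k} reachable from i_S and all transitions t_1,…,t_n of N and u_1,…,u_k of M such that m_0 →t_1 … →t_n m_n →u_1 … →u_k m_{n+k} and λ(t_i) = λ(u_j) = receive for all relevant i, j, there are markings m_0', …, m_{n+k}' such that m_0 = m_0' →u_1 … →u_k m_k' →t_1 … →t_n m_{n+k}' = m_{n+k}. -/

import Mathlib

namespace PortNets

/-- Direction of communication of a transition: send, receive, or internal (τ). -/
inductive Dir : Type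
  | send | receive | tau
deriving DecidableEq

/-- Preset of a node `x` with respect to a flow relation `F`. -/
def pre {Node : Type} (F : Set (Node × Node)) (x : Node) : Set Node := {y | (y, x) ∈ F}

/-- Postset of a node `x` with respect to a flow relation `F`. -/
def post {Node : Type} (F : Set (Node × Node)) (x : Node) : Set Node := {y | (x, y) ∈ F}

/-- Raw data of an open Petri net (with labels): internal places `P`, input places `I`,
output places `O`, transitions `T`, flow `F`, initial and final places, labeling `μ`. -/
structure OPN (Node L : Type) where
  P : Set Node
  I : Set Node
  O : Set Node
  T : Set Node
  F : Set (Node × Node)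
  init : Set Node
  fin : Set Node
  μ : Node → L

variable {Node L : Type}

/-- All places of an OPN. -/
def OPN.places (N : OPN Node L) : Set Node := N.P ∪ N.I ∪ N.O

/-- All nodes of an OPN. -/
def OPN.nodes (N : OPN Node L) : Set Node := N.places ∪ N.T

/-- Structural requirements of an open Petri net. -/
structure IsOPN (N : OPN Node L) : Prop where
  disjPI : N.P ∩ N.I = ∅
  disjPO : N.P ∩ N.O = ∅
  disjIO : N.I ∩ N.O = ∅
  disjPT : N.places ∩ N.T = ∅
  flow_sub : N.F ⊆ (N.places ×ˢ N.T) ∪ (N.T ×ˢ N.places)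
  no_pre_I : ∀ x ∈ N.I, pre N.F x = ∅
  no_post_O : ∀ x ∈ N.O, post N.F x = ∅
  not_both : ∀ t ∈ N.T, ¬((pre N.F t ∩ N.I).Nonempty ∧ (post N.F t ∩ N.O).Nonempty)
  init_sub : N.init ⊆ N.P
  fin_sub : N.fin ⊆ N.P

open Classical in
noncomputable def dir (N : OPN Node L) (t : Node) : Dir :=
  if (post N.F t ∩ N.O).Nonempty then Dir.send
  else if (pre N.F t ∩ N.I).Nonempty then Dir.receive
  else Dir.tau

open Classical in
noncomputable def fireAt (F : Set (Node × Node)) (m : Node → ℕ) (t : Node) : Node → ℕ :=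
  fun p => m p - (if (p, t) ∈ F then 1 else 0) + (if (t, p) ∈ F then 1 else 0)

/-- `Fires T F m t m'`: transition `t` is enabled in marking `m` and firing it yields `m'`. -/
def Fires (T : Set Node) (F : Set (Node × Node)) (m : Node → ℕ) (t : Node)
    (m' : Node → ℕ) : Prop :=
  t ∈ T ∧ (∀ p, (p, t) ∈ F → 1 ≤ m p) ∧ m' = fireAt F m t

/-- Firing a finite sequence of transitions. -/
inductive FireSeq (T : Set Node) (F : Set (Node × Node)) :
    (Node → ℕ) → List Node → (Node → ℕ) → Prop
  | nil (m : Node → ℕ) : FireSeq T F m [] m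
  | cons {m m' m'' : Node → ℕ} {t : Node} {σ : List Node} :
      Fires T F m t m' → FireSeq T F m' σ m'' → FireSeq T F m (t :: σ) m''

/-- Reachability of markings. -/
def Reach (T : Set Node) (F : Set (Node × Node)) (m m' : Node → ℕ) : Prop :=
  ∃ σ : List Node, FireSeq T F m σ m'

/-- Weak termination: from every marking reachable from `m0`, the marking `mf` is reachable. -/
def WeaklyTerminates (T : Set Node) (F : Set (Node × Node)) (m0 mf : Node → ℕ) : Prop :=
  ∀ m, Reach T F m0 m → Reach T F m mf

/-- The marking putting one token on each element of a set of places. -/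
noncomputable def mark (s : Set Node) : Node → ℕ := s.indicator fun _ => 1

/-- Flow relation of the skeleton: all arcs not adjacent to interface places. -/
def skF (N : OPN Node L) : Set (Node × Node) :=
  {x ∈ N.F | x.1 ∉ N.I ∪ N.O ∧ x.2 ∉ N.I ∪ N.O}

/-- The skeleton is a state machine: each transition has at most one place in its
preset and at most one in its postset. -/
def IsSM (N : OPN Node L) : Prop :=
  ∀ t ∈ N.T, (pre (skF N) t).Subsingleton ∧ (post (skF N) t).Subsingleton

/-- `x` lies on a path from `i` to `f` w.r.t. flow `F`. -/
def OnPath (F : Set (Node × Node)) (i f x : Node) : Prop :=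
  ∃ l : List Node, l ≠ [] ∧ List.Chain' (fun a b => (a, b) ∈ F) l ∧
    l.head? = some i ∧ l.getLast? = some f ∧ x ∈ l

/-- Workflow net (with places `P`, transitions `T`, flow `F`): `i` is the unique place with
empty preset, `f` the unique place with empty postset, and every node is on a path
from `i` to `f`. -/
def IsWFNOn (P T : Set Node) (F : Set (Node × Node)) (i f : Node) : Prop :=
  i ∈ P ∧ f ∈ P ∧ pre F i = ∅ ∧ post F f = ∅ ∧
    (∀ p ∈ P, pre F p = ∅ → p = i) ∧
    (∀ p ∈ P, post F p = ∅ → p = f) ∧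
    (∀ x ∈ P ∪ T, OnPath F i f x)

/-- Transition `t` is connected (by an arc, in either direction) to node `x`. -/
def connected (N : OPN Node L) (t x : Node) : Prop := (x, t) ∈ N.F ∨ (t, x) ∈ N.F

/-- A labeled portnet: an OPN whose skeleton is a state-machine workflow net, with
singleton `init` and `fin`, every transition connected to exactly one interface place,
transitions sharing an interface place sharing a label, and transitions sharing a
label sharing their interface place connections. -/
structure IsPortnet (N : OPN Node L) : Prop where
  isOPN : IsOPN N
  isSM : IsSM N
  init_single : ∃ i, N.init = {i}
  fin_single : ∃ f, N.fin = {f}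
  isWFN : ∀ i f, N.init = {i} → N.fin = {f} → IsWFNOn N.P N.T (skF N) i f
  one_iface : ∀ t ∈ N.T, ∃! x, x ∈ N.I ∪ N.O ∧ connected N t x
  same_iface_label : ∀ x ∈ N.I ∪ N.O, ∀ t t', t ∈ N.T → t' ∈ N.T →
    connected N t x → connected N t' x → N.μ t = N.μ t'
  same_label_iface : ∀ t ∈ N.T, ∀ t' ∈ N.T, N.μ t = N.μ t' →
    ∀ x ∈ N.I ∪ N.O, (connected N t x ↔ connected N t' x)

/-- Observable choices: distinct transitions in the postset of a place have distinct labels. -/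
def ObservableChoices (N : OPN Node L) : Prop :=
  ∀ p ∈ N.P, ∀ t ∈ post N.F p, ∀ t' ∈ post N.F p, t ≠ t' → N.μ t ≠ N.μ t'

/-- Choice property: all transitions in the postset of a place have the same direction. -/
def ChoiceProp (N : OPN Node L) : Prop :=
  ∀ p ∈ N.P, ∀ t ∈ post N.F p, ∀ t' ∈ post N.F p, dir N t = dir N t'

/-- Diamond property. -/
def DiamondProp (N : OPN Node L) : Prop :=
  ∀ p ∈ N.P, ∀ t ∈ post N.F p, ∀ t' ∈ post N.F p, dir N t ≠ dir N t' →
    ∀ q ∈ post (skF N) t, ∀ q' ∈ post (skF N) t',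
      ∃ u ∈ post (skF N) q, ∃ u' ∈ post (skF N) q',
        (post (skF N) u ∩ post (skF N) u').Nonempty ∧
        N.μ t = N.μ u' ∧ N.μ t' = N.μ u

/-- Loop property. -/
def LoopProp (N : OPN Node L) : Prop :=
  ∀ p ∈ N.P, ∀ t ∈ post N.F p, ∀ t' ∈ post N.F p, t ≠ t' → dir N t = dir N t' →
    ∀ (l : List Node) (t'' : Node),
      List.Chain' (fun a b => (a, b) ∈ N.F) (p :: t :: (l ++ [t''])) →
      t'' ∈ N.T → N.μ t'' = N.μ t' →
      (∀ u ∈ l, u ∈ N.T → N.μ u ≠ N.μ t') →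
      ∃ v ∈ t :: (l ++ [t'']), v ∈ N.T ∧ dir N v ≠ dir N t

/-- Well-formed labeled portnet. -/
def WellFormed (N : OPN Node L) : Prop :=
  IsPortnet N ∧ ObservableChoices N ∧ DiamondProp N ∧ LoopProp N

/-- `(M, φ)` is a partial mirror of the labeled portnet `N`. -/
structure IsPartialMirror (N M : OPN Node L) (φ : Node → Node) : Prop where
  portN : IsPortnet N
  portM : IsPortnet M
  inj : Set.InjOn φ M.nodes
  mapsP : ∀ x ∈ M.P, φ x ∈ N.P
  mapsT : ∀ x ∈ M.T, φ x ∈ N.T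
  mapsI : ∀ x ∈ M.I, φ x ∈ N.O
  mapsO : ∀ x ∈ M.O, φ x ∈ N.I
  flow_same : ∀ x y, (x, y) ∈ M.F → x ∉ M.I → y ∉ M.O → (φ x, φ y) ∈ N.F
  flow_rev : ∀ x y, (x, y) ∈ M.F → (x ∈ M.I ∨ y ∈ M.O) → (φ y, φ x) ∈ N.F
  init_eq : φ '' M.init = N.init
  fin_eq : φ '' M.fin = N.fin
  lab : ∀ t ∈ M.T, M.μ t = N.μ (φ t)
  send_cover : ∀ p ∈ M.P, ∀ t, (φ p, t) ∈ N.F → dir N t = Dir.send →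
    ∃ t', (p, t') ∈ M.F ∧ φ t' = t

/-- Composability of two OPNs. -/
def Composable (N M : OPN Node L) : Prop :=
  (N.nodes ∩ M.nodes = (N.I ∪ N.O) ∩ (M.I ∪ M.O)) ∧
  (((N.I ∩ M.O) ∪ (M.I ∩ N.O)).Nonempty →
    N.O ⊆ M.I ∧ M.O ⊆ N.I ∧ N.I ∩ M.I = ∅ ∧ N.O ∩ M.O = ∅)

open Classical in
noncomputable def compose2 (N M : OPN Node L) : OPN Node L where
  P := N.P ∪ M.P ∪ ((N.I ∪ M.I) ∩ (N.O ∪ M.O))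
  I := (N.I ∪ M.I) \ (N.O ∪ M.O)
  O := (N.O ∪ M.O) \ (N.I ∪ M.I)
  T := N.T ∪ M.T
  F := N.F ∪ M.F
  init := N.init ∪ M.init
  fin := N.fin ∪ M.fin
  μ := fun x => if x ∈ N.T then N.μ x else M.μ x

end PortNets

namespace PortNets

section Helpers

variable {Node L : Type} {N M : OPN Node L}

/-- Composability is symmetric. -/
lemma comp_symm (hcomp : Composable N M) : Composable M N := by
  constructor
  · rw [Set.inter_comm, hcomp.1, Set.inter_comm]
  · intro hne
    obtain ⟨hNO, hMO, hII, hOO⟩ := hcomp.2 (by rwa [Set.union_comm] at hne)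
    exact ⟨hMO, hNO, by rwa [Set.inter_comm] at hII, by rwa [Set.inter_comm] at hOO⟩

/-- A transition of `N` is not a node of `M`. -/
lemma t_not_M_node (hcomp : Composable N M) (hON : IsOPN N)
    {t : Node} (ht : t ∈ N.T) : t ∉ M.nodes := by
  intro h
  have h2 : t ∈ N.nodes ∩ M.nodes := ⟨Or.inr ht, h⟩
  rw [hcomp.1] at h2
  have h3 : t ∈ N.places := by
    rcases h2.1 with h' | h'
    · exact Or.inl (Or.inr h')
    · exact Or.inr h'
  have h4 : t ∈ N.places ∩ N.T := ⟨h3, ht⟩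
  rw [hON.disjPT] at h4
  exact h4

/-- Preset places of a transition of `N` (in the composed flow) are places of `N`. -/
lemma pre_sub (hcomp : Composable N M) (hON : IsOPN N) (hOM : IsOPN M)
    {t p : Node} (ht : t ∈ N.T) (h : (p, t) ∈ N.F ∪ M.F) : p ∈ N.places := by
  rcases h with h | h
  · rcases hON.flow_sub h with h' | h'
    · exact h'.1
    · exfalso
      have h4 : t ∈ N.places ∩ N.T := ⟨h'.2, ht⟩
      rw [hON.disjPT] at h4
      exact h4
  · exfalso
    apply t_not_M_node hcomp hON ht
    rcases hOM.flow_sub h with h' | h'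
    · exact Or.inr h'.2
    · exact Or.inl h'.2

/-- Postset places of a receive transition of `N` (in the composed flow) are internal
places of `N`. -/
lemma post_sub (hcomp : Composable N M) (hON : IsOPN N) (hOM : IsOPN M)
    {t p : Node} (ht : t ∈ N.T) (hdt : dir N t = Dir.receive)
    (h : (t, p) ∈ N.F ∪ M.F) : p ∈ N.P := by
  rcases h with h | h
  · have hpl : p ∈ N.places := by
      rcases hON.flow_sub h with h' | h'
      · exfalso
        have h4 : t ∈ N.places ∩ N.T := ⟨h'.1, ht⟩
        rw [hON.disjPT] at h4
        exact h4
      · exact h'.2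
    have hnO : ¬(post N.F t ∩ N.O).Nonempty := by
      intro hne
      rw [dir, if_pos hne] at hdt
      exact Dir.noConfusion hdt
    rcases hpl with (hp | hp) | hp
    · exact hp
    · exfalso
      have := hON.no_pre_I p hp
      have ht' : t ∈ pre N.F p := h
      rw [this] at ht'
      exact ht'
    · exact absurd ⟨p, h, hp⟩ hnO
  · exfalso
    apply t_not_M_node hcomp hON ht
    rcases hOM.flow_sub h with h' | h'
    · exact Or.inl h'.1
    · exact Or.inr h'.1

/-- An internal place of `N` is not a place of `M`. -/
lemma places_disj (hcomp : Composable N M) (hON : IsOPN N)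
    {p : Node} (hpN : p ∈ N.P) (hpM : p ∈ M.places) : False := by
  have h2 : p ∈ N.nodes ∩ M.nodes := ⟨Or.inl (Or.inl (Or.inl hpN)), Or.inl hpM⟩
  rw [hcomp.1] at h2
  rcases h2.1 with h | h
  · have h3 : p ∈ N.P ∩ N.I := ⟨hpN, h⟩
    rw [hON.disjPI] at h3
    exact h3
  · have h3 : p ∈ N.P ∩ N.O := ⟨hpN, h⟩
    rw [hON.disjPO] at h3
    exact h3

/-- An internal place of `M` is not a place of `N`. -/
lemma places_disj' (hcomp : Composable N M) (hOM : IsOPN M)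
    {p : Node} (hpM : p ∈ M.P) (hpN : p ∈ N.places) : False :=
  places_disj (comp_symm hcomp) hOM hpM hpN

private lemma swap_arith (a b c d n : ℕ) (ha1 : a ≤ 1) (hb1 : b ≤ 1) (hc1 : c ≤ 1)
    (hd1 : d ≤ 1) (hna : a = 1 → 1 ≤ n) (hnc : c = 1 → 1 ≤ n)
    (hnac : a = 1 → c = 1 → 2 ≤ n) (hbc : ¬(b = 1 ∧ c = 1)) (hbd : ¬(b = 1 ∧ d = 1))
    (had : ¬(a = 1 ∧ d = 1)) :
    n - a + b - c + d = n - c + d - a + b := by omega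

/-- Swapping a single receive transition of `N` with a single receive transition of `M`. -/
lemma swap_one (hcomp : Composable N M) (hON : IsOPN N) (hOM : IsOPN M)
    {m0 m1 m2 : Node → ℕ} {t u : Node}
    (ht : t ∈ N.T) (hdt : dir N t = Dir.receive)
    (hu : u ∈ M.T) (hdu : dir M u = Dir.receive)
    (h1 : Fires (compose2 N M).T (compose2 N M).F m0 t m1)
    (h2 : Fires (compose2 N M).T (compose2 N M).F m1 u m2) :
    ∃ m', Fires (compose2 N M).T (compose2 N M).F m0 u m' ∧
      Fires (compose2 N M).T (compose2 N M).F m' t m2 := by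
  classical
  obtain ⟨htT, henT, hm1⟩ := h1
  obtain ⟨huT, henU, hm2⟩ := h2
  have hcompM := comp_symm hcomp
  have hswap : ∀ {x : Node × Node}, x ∈ N.F ∪ M.F → x ∈ M.F ∪ N.F := by
    intro x hx
    rcases hx with hx | hx
    · exact Or.inr hx
    · exact Or.inl hx
  have haP : ∀ p, (p, t) ∈ (compose2 N M).F → p ∈ N.places :=
    fun p h => pre_sub hcomp hON hOM ht h
  have hbP : ∀ p, (t, p) ∈ (compose2 N M).F → p ∈ N.P :=
    fun p h => post_sub hcomp hON hOM ht hdt h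
  have hcP : ∀ p, (p, u) ∈ (compose2 N M).F → p ∈ M.places :=
    fun p h => pre_sub hcompM hOM hON hu (hswap h)
  have hdP : ∀ p, (u, p) ∈ (compose2 N M).F → p ∈ M.P :=
    fun p h => post_sub hcompM hOM hON hu hdu (hswap h)
  -- `u` is already enabled at `m0`
  have henU0 : ∀ p, (p, u) ∈ (compose2 N M).F → 1 ≤ m0 p := by
    intro p hp
    have h := henU p hp
    rw [hm1] at h
    unfold fireAt at h
    have hb : (t, p) ∉ (compose2 N M).F :=
      fun hb => places_disj hcomp hON (hbP p hb) (hcP p hp)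
    rw [if_neg hb] at h
    split_ifs at h <;> omega
  -- if `p` is consumed by both `t` and `u` then `m0 p ≥ 2`
  have htwo : ∀ p, (p, t) ∈ (compose2 N M).F → (p, u) ∈ (compose2 N M).F → 2 ≤ m0 p := by
    intro p ha hc
    have h := henU p hc
    rw [hm1] at h
    unfold fireAt at h
    have hb : (t, p) ∉ (compose2 N M).F :=
      fun hb => places_disj hcomp hON (hbP p hb) (hcP p hc)
    rw [if_pos ha, if_neg hb] at h
    omega
  -- `t` is enabled after firing `u` at `m0`
  have henT' : ∀ p, (p, t) ∈ (compose2 N M).F → 1 ≤ fireAt (compose2 N M).F m0 u p := by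
    intro p hp
    have hd : (u, p) ∉ (compose2 N M).F :=
      fun hd => places_disj' hcomp hOM (hdP p hd) (haP p hp)
    unfold fireAt
    rw [if_neg hd]
    by_cases hc : (p, u) ∈ (compose2 N M).F
    · rw [if_pos hc]
      have := htwo p hp hc
      omega
    · rw [if_neg hc]
      have := henT p hp
      omega
  refine ⟨fireAt (compose2 N M).F m0 u, ⟨huT, henU0, rfl⟩, htT, henT', ?_⟩
  rw [hm2, hm1]
  funext p
  unfold fireAt
  set A := (if (p, t) ∈ (compose2 N M).F then 1 else 0) with hA
  set B := (if (t, p) ∈ (compose2 N M).F then 1 else 0) with hB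
  set C := (if (p, u) ∈ (compose2 N M).F then 1 else 0) with hC
  set D := (if (u, p) ∈ (compose2 N M).F then 1 else 0) with hD
  have memA : A = 1 → (p, t) ∈ (compose2 N M).F := by
    intro h; by_cases hx : (p, t) ∈ (compose2 N M).F
    · exact hx
    · rw [hA, if_neg hx] at h; omega
  have memB : B = 1 → (t, p) ∈ (compose2 N M).F := by
    intro h; by_cases hx : (t, p) ∈ (compose2 N M).F
    · exact hx
    · rw [hB, if_neg hx] at h; omega
  have memC : C = 1 → (p, u) ∈ (compose2 N M).F := by
    intro h; by_cases hx : (p, u) ∈ (compose2 N M).F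
    · exact hx
    · rw [hC, if_neg hx] at h; omega
  have memD : D = 1 → (u, p) ∈ (compose2 N M).F := by
    intro h; by_cases hx : (u, p) ∈ (compose2 N M).F
    · exact hx
    · rw [hD, if_neg hx] at h; omega
  refine swap_arith A B C D (m0 p) ?_ ?_ ?_ ?_ ?_ ?_ ?_ ?_ ?_ ?_
  · rw [hA]; split_ifs <;> omega
  · rw [hB]; split_ifs <;> omega
  · rw [hC]; split_ifs <;> omega
  · rw [hD]; split_ifs <;> omega
  · intro h; exact henT p (memA h)
  · intro h; exact henU0 p (memC h)
  · intro h h'; exact htwo p (memA h) (memC h')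
  · rintro ⟨h, h'⟩; exact places_disj hcomp hON (hbP p (memB h)) (hcP p (memC h'))
  · rintro ⟨h, h'⟩;
    exact places_disj hcomp hON (hbP p (memB h)) (Or.inl (Or.inl (hdP p (memD h'))))
  · rintro ⟨h, h'⟩; exact places_disj' hcomp hOM (hdP p (memD h')) (haP p (memA h))

/-- Swapping one receive transition of `M` backwards over a list of receive
transitions of `N`. -/
lemma swap_list_one (hcomp : Composable N M) (hON : IsOPN N) (hOM : IsOPN M)
    {m0 mn m2 : Node → ℕ} {ts : List Node} {u : Node}
    (hts : ∀ x ∈ ts, x ∈ N.T ∧ dir N x = Dir.receive)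
    (hu : u ∈ M.T) (hdu : dir M u = Dir.receive)
    (h1 : FireSeq (compose2 N M).T (compose2 N M).F m0 ts mn)
    (h2 : Fires (compose2 N M).T (compose2 N M).F mn u m2) :
    ∃ m', Fires (compose2 N M).T (compose2 N M).F m0 u m' ∧
      FireSeq (compose2 N M).T (compose2 N M).F m' ts m2 := by
  induction h1 generalizing m2 with
  | nil m => exact ⟨m2, h2, FireSeq.nil m2⟩
  | @cons m m' m'' t σ hf hs ih =>
    have htr := hts t List.mem_cons_self
    obtain ⟨mA, hA1, hA2⟩ := ih (fun x hx => hts x (List.mem_cons_of_mem _ hx)) h2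
    obtain ⟨mB, hB1, hB2⟩ := swap_one hcomp hON hOM htr.1 htr.2 hu hdu hf hA1
    exact ⟨mB, hB1, FireSeq.cons hB2 hA2⟩

end Helpers

/-- swapping lemma: in the composition of a well-formed labeled portnet `N`
and its well-formed partial mirror `(M, φ)`, a sequence of receive transitions of `N`
followed by a sequence of receive transitions of `M` can be fired in the opposite order,
reaching the same marking. -/
theorem swap_receives {Node L : Type} (N M : OPN Node L) (φ : Node → Node)
    (hN : WellFormed N) (hM : WellFormed M)
    (hmir : IsPartialMirror N M φ) (hcomp : Composable N M)
    (m0 mn mnk : Node → ℕ) (ts us : List Node)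
    (hreach : Reach (compose2 N M).T (compose2 N M).F (mark N.init + mark M.init) m0)
    (hts : ∀ x ∈ ts, x ∈ N.T ∧ dir N x = Dir.receive)
    (hus : ∀ x ∈ us, x ∈ M.T ∧ dir M x = Dir.receive)
    (h1 : FireSeq (compose2 N M).T (compose2 N M).F m0 ts mn)
    (h2 : FireSeq (compose2 N M).T (compose2 N M).F mn us mnk) :
    ∃ mk' : Node → ℕ,
      FireSeq (compose2 N M).T (compose2 N M).F m0 us mk' ∧
      FireSeq (compose2 N M).T (compose2 N M).F mk' ts mnk := by
  have hON : IsOPN N := hN.1.isOPN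
  have hOM : IsOPN M := hM.1.isOPN
  clear hreach hmir hN hM
  induction h2 generalizing m0 with
  | nil m => exact ⟨m0, FireSeq.nil m0, h1⟩
  | @cons m m' m'' u σ hf hs ih =>
    have hur := hus u List.mem_cons_self
    obtain ⟨mA, hA1, hA2⟩ := swap_list_one hcomp hON hOM hts hur.1 hur.2 h1 hf
    obtain ⟨mk', hk1, hk2⟩ := ih mA (fun x hx => hus x (List.mem_cons_of_mem _ hx)) hA2
    exact ⟨mk', FireSeq.cons hA1 hk1, hk2⟩

end PortNets
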